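/- Let P be prime. For the P×P Fourier matrix W_P, the P×P² full Gabor system matrix G(c) = [D₀W_P | D₁W_P | ⋯ | D_{P−1}W_P], where D_k is the diagonal matrix with diagonal T^k c, has the property that for a dense open subset of c ∈ ℂ^P, every minor of G(c) is nonzero; in particular, G(c) has full Spark P+1 for such c. -/

import Mathlib

open scoped Classical

/-- The `P × P²` full Gabor system matrix `G(c) = [D₀W_P | D₁W_P | ⋯ | D_{P-1}W_P]`,
where `D_k = diag(T^k c)` and `W_P` is the `P×P` Fourier matrix. The column indexed by
`(k, q)` has entries `n ↦ c_{n-k} · e^{2πi n q / P}`. -/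
noncomputable def gaborMatrix (P : ℕ) (c : Fin P → ℂ) :
    Matrix (Fin P) (Fin P × Fin P) ℂ :=
  fun n kq => c (n - kq.1) *
    Complex.exp (2 * Real.pi * Complex.I * (n : ℕ) * (kq.2 : ℕ) / P)

open Polynomial Matrix Finset

noncomputable section

namespace Gabor

variable {R : Type*} [CommRing R]

/-- substitution X j ↦ X i, other variables fixed -/
def subst {σ : Type*} [DecidableEq σ] (i j : σ) :
    MvPolynomial σ R →ₐ[R] MvPolynomial σ R :=
  MvPolynomial.aeval (fun t => if t = j then MvPolynomial.X i else MvPolynomial.X t)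

lemma sub_dvd_sub_subst {σ : Type*} [DecidableEq σ] (i j : σ) (f : MvPolynomial σ R) :
    (MvPolynomial.X j - MvPolynomial.X i : MvPolynomial σ R) ∣ f - subst i j f := by
  induction f using MvPolynomial.induction_on with
  | C a => simp [subst]
  | add p q hp hq =>
      have : p + q - subst i j (p + q) = (p - subst i j p) + (q - subst i j q) := by
        rw [map_add]; ring
      rw [this]; exact dvd_add hp hq
  | mul_X p n hp =>
      have : p * MvPolynomial.X n - subst i j (p * MvPolynomial.X n)
          = (p - subst i j p) * MvPolynomial.X n
            + subst i j p * (MvPolynomial.X n - subst i j (MvPolynomial.X n)) := by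
        rw [_root_.map_mul]; ring
      rw [this]
      refine dvd_add (Dvd.dvd.mul_right hp _) (Dvd.dvd.mul_left ?_ _)
      by_cases h : n = j
      · subst h; simp [subst]
      · simp [subst, h]

lemma X_sub_X_dvd {σ : Type*} [DecidableEq σ] (i j : σ) (f : MvPolynomial σ R)
    (hf : subst i j f = 0) :
    (MvPolynomial.X j - MvPolynomial.X i : MvPolynomial σ R) ∣ f := by
  have := sub_dvd_sub_subst (R := R) i j f
  rwa [hf, sub_zero] at this

lemma prime_X_sub_X {σ : Type*} [DecidableEq σ] [IsDomain R] {i j : σ} (h : i ≠ j) :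
    Prime (MvPolynomial.X j - MvPolynomial.X i : MvPolynomial σ R) := by
  classical
  -- move variable j to the `Option` slot
  let e : σ ≃ Option {t : σ // t ≠ j} := (Equiv.optionSubtypeNe j).symm
  let T : MvPolynomial σ R ≃ₐ[R] Polynomial (MvPolynomial {t : σ // t ≠ j} R) :=
    (MvPolynomial.renameEquiv R e).trans (MvPolynomial.optionEquivLeft R _)
  have hTj : T (MvPolynomial.X j) = Polynomial.X := by
    simp only [T, AlgEquiv.trans_apply, MvPolynomial.renameEquiv_apply,
      MvPolynomial.rename_X]
    have : e j = none := Equiv.optionSubtypeNe_symm_self j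
    rw [this, MvPolynomial.optionEquivLeft_X_none]
  have hTi : T (MvPolynomial.X i) = Polynomial.C (MvPolynomial.X ⟨i, h⟩) := by
    simp only [T, AlgEquiv.trans_apply, MvPolynomial.renameEquiv_apply,
      MvPolynomial.rename_X]
    have : e i = some ⟨i, h⟩ := Equiv.optionSubtypeNe_symm_of_ne h
    rw [this, MvPolynomial.optionEquivLeft_X_some]
  have : Prime (T (MvPolynomial.X j - MvPolynomial.X i)) := by
    rw [map_sub, hTj, hTi]
    exact Polynomial.prime_X_sub_C _
  exact (MulEquiv.prime_iff T).1 this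

end Gabor

namespace Gabor

lemma prod_primes_dvd' {α : Type*} [CommRing α] [IsDomain α] {ι : Type*} [DecidableEq ι]
    (s : Finset ι) (e : ι → α)
    (hp : ∀ p ∈ s, Prime (e p))
    (hnd : ∀ p ∈ s, ∀ q ∈ s, p ≠ q → ¬ e p ∣ e q) :
    ∀ (f : α), (∀ p ∈ s, e p ∣ f) → (∏ p ∈ s, e p) ∣ f := by
  classical
  induction s using Finset.induction_on with
  | empty => simp
  | @insert a s' hnotmem ih =>
      intro f hd
      obtain ⟨g, hg⟩ := hd a (Finset.mem_insert_self a s')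
      have hgdvd : ∀ p ∈ s', e p ∣ g := by
        intro p hps
        have hpa : p ≠ a := by rintro rfl; exact hnotmem hps
        have hpf : e p ∣ e a * g := hg ▸ hd p (Finset.mem_insert_of_mem hps)
        rcases (hp p (Finset.mem_insert_of_mem hps)).dvd_mul.1 hpf with h | h
        · exact absurd h (hnd p (Finset.mem_insert_of_mem hps) a
            (Finset.mem_insert_self a s') hpa)
        · exact h
      have key : (∏ p ∈ s', e p) ∣ g :=
        ih (fun p hps => hp p (Finset.mem_insert_of_mem hps))
          (fun p hps q hqs => hnd p (Finset.mem_insert_of_mem hps) q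
            (Finset.mem_insert_of_mem hqs)) g hgdvd
      rw [Finset.prod_insert hnotmem, hg]
      exact mul_dvd_mul_left (e a) key

open MvPolynomial in
lemma not_dvd_X_sub_X {σ : Type*} [DecidableEq σ] [LinearOrder σ] {i j i' j' : σ}
    (hij : i < j) (hij' : i' < j') (hne : (i, j) ≠ (i', j')) :
    ¬ ((X j - X i : MvPolynomial σ ℤ) ∣ (X j' - X i' : MvPolynomial σ ℤ)) := by
  intro ⟨h, hh⟩
  have h0 : subst (R := ℤ) i j (X j - X i) = 0 := by
    simp [subst]
  have key : subst (R := ℤ) i j (X j' - X i') = 0 := by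
    rw [hh, _root_.map_mul, h0, zero_mul]
  rw [map_sub] at key
  have hXj' : subst (R := ℤ) i j (X j') = if j' = j then X i else X j' := by
    simp [subst]
  have hXi' : subst (R := ℤ) i j (X i') = if i' = j then X i else X i' := by
    simp [subst]
  rw [hXj', hXi', sub_eq_zero] at key
  by_cases h1 : j' = j <;> by_cases h2 : i' = j
  · exact absurd (h1 ▸ h2) hij'.ne
  · rw [if_pos h1, if_neg h2] at key
    exact hne (by rw [X_injective key, h1])
  · rw [if_neg h1, if_pos h2] at key
    have : j' = i := X_injective key
    exact absurd (this ▸ h2 ▸ hij) (lt_asymm hij')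
  · rw [if_neg h1, if_neg h2] at key
    exact hij'.ne (X_injective key).symm

lemma prod_pairs {m : ℕ} {M : Type*} [CommMonoid M] (F : Fin m × Fin m → M) :
    ∏ p ∈ Finset.univ.filter (fun p : Fin m × Fin m => p.1 < p.2), F p
      = ∏ i : Fin m, ∏ j ∈ Finset.Ioi i, F (i, j) := by
  rw [Finset.prod_filter]
  rw [← Finset.univ_product_univ, Finset.prod_product]
  refine Finset.prod_congr rfl fun i _ => ?_
  rw [← Finset.filter_lt_eq_Ioi, Finset.prod_filter]

open MvPolynomial in
lemma eval_one_psi {m : ℕ} (w : Fin m → ℕ) (f : MvPolynomial (Fin m) ℤ) :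
    Polynomial.eval 1 (MvPolynomial.aeval (fun t => (Polynomial.X : Polynomial ℤ) ^ (w t)) f)
      = MvPolynomial.eval (fun _ => (1 : ℤ)) f := by
  induction f using MvPolynomial.induction_on with
  | C a => simp
  | add p q hp hq => simp [hp, hq]
  | mul_X p n hp => simp [hp]

open MvPolynomial in
theorem cheb {P : ℕ} (hP : P.Prime) {m : ℕ} (a b : Fin m → ℕ)
    (haP : ∀ i, a i < P) (hbP : ∀ j, b j < P)
    (ha : Function.Injective a) (hb : Function.Injective b) :
    Matrix.det (Matrix.of fun i j : Fin m =>
      Complex.exp (2 * Real.pi * Complex.I / P) ^ (a i * b j)) ≠ 0 := by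
  classical
  haveI : Fact P.Prime := ⟨hP⟩
  set ζ : ℂ := Complex.exp (2 * Real.pi * Complex.I / P) with hζdef
  have hζ : IsPrimitiveRoot ζ P := Complex.isPrimitiveRoot_exp P hP.ne_zero
  set pairs : Finset (Fin m × Fin m) :=
    Finset.univ.filter (fun p : Fin m × Fin m => p.1 < p.2) with hpairs
  set Dpoly : MvPolynomial (Fin m) ℤ :=
    Matrix.det (Matrix.of fun i j : Fin m => (X i) ^ (b j)) with hDpoly
  set Vd : MvPolynomial (Fin m) ℤ := ∏ p ∈ pairs, (X p.2 - X p.1) with hVd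
  -- each linear factor divides Dpoly
  have hdvd : Vd ∣ Dpoly := by
    refine prod_primes_dvd' pairs _ ?_ ?_ Dpoly ?_
    · intro p hp
      exact prime_X_sub_X (Finset.mem_filter.1 hp).2.ne
    · intro p hp q hq hne
      refine not_dvd_X_sub_X (Finset.mem_filter.1 hp).2 (Finset.mem_filter.1 hq).2 ?_
      simpa [Prod.ext_iff] using hne
    · intro p hp
      have hplt : p.1 < p.2 := (Finset.mem_filter.1 hp).2
      refine X_sub_X_dvd p.1 p.2 Dpoly ?_
      have := RingHom.map_det (subst (R := ℤ) p.1 p.2).toRingHom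
        (Matrix.of fun i j : Fin m => (X i) ^ (b j))
      rw [hDpoly]
      rw [show ((subst (R := ℤ) p.1 p.2) (Matrix.det (Matrix.of fun i j : Fin m => (X i) ^ (b j)))
        = _) from this]
      refine Matrix.det_zero_of_row_eq hplt.ne' ?_
      funext j
      simp [subst, RingHom.mapMatrix_apply, Matrix.map_apply]
  obtain ⟨Q, hQ⟩ := hdvd
  -- specializations
  set ψ : (Fin m → ℕ) → (MvPolynomial (Fin m) ℤ →ₐ[ℤ] Polynomial ℤ) :=
    fun w => MvPolynomial.aeval (fun t => (Polynomial.X : Polynomial ℤ) ^ (w t)) with hψ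
  have hψdet : ∀ w, ψ w Dpoly
      = Matrix.det (Matrix.of fun i j : Fin m => (Polynomial.X : Polynomial ℤ) ^ (w i * b j)) := by
    intro w
    rw [hDpoly, show ((ψ w) (Matrix.det (Matrix.of fun i j : Fin m => (X i) ^ (b j))) = _) from
      RingHom.map_det (ψ w).toRingHom _]
    congr 1
    funext i j
    simp [RingHom.mapMatrix_apply, Matrix.map_apply, hψ, pow_mul]
  set S : ℕ → Polynomial ℤ := fun n => ∑ i ∈ Finset.range n, Polynomial.X ^ i with hS
  have hfac : ∀ u v : ℕ, (Polynomial.X ^ u - Polynomial.X ^ v : Polynomial ℤ)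
      = (Polynomial.X - 1) * (S u - S v) := by
    intro u v
    have h1 := geom_sum_mul (Polynomial.X : Polynomial ℤ) u
    have h2 := geom_sum_mul (Polynomial.X : Polynomial ℤ) v
    rw [hS]
    rw [mul_sub]
    rw [mul_comm (Polynomial.X - 1), mul_comm (Polynomial.X - 1), h1, h2]
    ring
  have hS1 : ∀ u : ℕ, (S u).eval 1 = (u : ℤ) := by
    intro u; simp [hS, Polynomial.eval_finset_sum]
  have hψV : ∀ w, ψ w Vd = (Polynomial.X - 1) ^ pairs.card
      * ∏ p ∈ pairs, (S (w p.2) - S (w p.1)) := by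
    intro w
    rw [hVd, map_prod]
    have : ∀ p ∈ pairs, (ψ w) (X p.2 - X p.1)
        = (Polynomial.X - 1) * (S (w p.2) - S (w p.1)) := by
      intro p _
      rw [map_sub]
      simp only [hψ, MvPolynomial.aeval_X]
      exact hfac (w p.2) (w p.1)
    rw [Finset.prod_congr rfl this, Finset.prod_mul_distrib, Finset.prod_const]
  -- the Vandermonde specialization
  have hvdm : ψ (fun t : Fin m => (t : ℕ)) Dpoly
      = ∏ p ∈ pairs, ((Polynomial.X : Polynomial ℤ) ^ (b p.2) - Polynomial.X ^ (b p.1)) := by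
    rw [hψdet]
    have : (Matrix.of fun i j : Fin m => (Polynomial.X : Polynomial ℤ) ^ ((i : ℕ) * b j))
        = (Matrix.vandermonde (fun j : Fin m => (Polynomial.X : Polynomial ℤ) ^ (b j)))ᵀ := by
      funext i j
      simp [Matrix.vandermonde, Matrix.transpose_apply, ← pow_mul, mul_comm]
    rw [this, Matrix.det_transpose, Matrix.det_vandermonde, hpairs, prod_pairs]
  set w1 : Fin m → ℕ := fun t => (t : ℕ) with hw1
  set q1 : Polynomial ℤ := ψ w1 Q with hq1def
  have hX1 : (Polynomial.X - 1 : Polynomial ℤ) ≠ 0 := by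
    have := Polynomial.X_sub_C_ne_zero (1 : ℤ)
    simpa using this
  have key1 : (∏ p ∈ pairs, (S (b p.2) - S (b p.1)))
      = (∏ p ∈ pairs, (S (w1 p.2) - S (w1 p.1))) * q1 := by
    have e1 : ψ w1 Dpoly = (Polynomial.X - 1) ^ pairs.card
        * ∏ p ∈ pairs, (S (b p.2) - S (b p.1)) := by
      rw [hvdm]
      have : ∀ p ∈ pairs, ((Polynomial.X : Polynomial ℤ) ^ (b p.2) - Polynomial.X ^ (b p.1))
          = (Polynomial.X - 1) * (S (b p.2) - S (b p.1)) := fun p _ => hfac _ _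
      rw [Finset.prod_congr rfl this, Finset.prod_mul_distrib, Finset.prod_const]
    have e2 : ψ w1 Dpoly = (Polynomial.X - 1) ^ pairs.card
        * ((∏ p ∈ pairs, (S (w1 p.2) - S (w1 p.1))) * q1) := by
      rw [hQ, _root_.map_mul, hψV, hq1def, mul_assoc]
    exact mul_left_cancel₀ (pow_ne_zero _ hX1) (e1.symm.trans e2)
  -- evaluate at 1
  have key1e : (∏ p ∈ pairs, ((b p.2 : ℤ) - (b p.1 : ℤ)))
      = (∏ p ∈ pairs, ((p.2 : ℤ) - (p.1 : ℤ))) * q1.eval 1 := by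
    have := congrArg (Polynomial.eval 1) key1
    simpa [Polynomial.eval_prod, hS1, hw1] using this
  have hintP : Prime (P : ℤ) := Nat.prime_iff_prime_int.1 hP
  have hfactor : ∀ (x y : ℕ), x < P → y < P → x ≠ y → ¬ (P : ℤ) ∣ ((x : ℤ) - y) := by
    intro x y hx hy hxy hdvd
    have : (x : ℤ) - y = 0 := by
      refine Int.eq_zero_of_abs_lt_dvd hdvd ?_
      rw [abs_sub_lt_iff]
      omega
    have : (x : ℤ) = y := by linarith
    exact hxy (by exact_mod_cast this)
  have hmP : m ≤ P := by
    have : Function.Injective (fun i : Fin m => (⟨a i, haP i⟩ : Fin P)) := by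
      intro x y hxy
      exact ha (by simpa [Fin.ext_iff] using hxy)
    simpa using Fintype.card_le_of_injective _ this
  have hq1P : ¬ (P : ℤ) ∣ q1.eval 1 := by
    intro hdvd
    have : (P : ℤ) ∣ ∏ p ∈ pairs, ((b p.2 : ℤ) - (b p.1 : ℤ)) := by
      rw [key1e]; exact Dvd.dvd.mul_left hdvd _
    obtain ⟨p, hp, hpd⟩ := hintP.exists_mem_finset_dvd this
    exact hfactor _ _ (hbP p.2) (hbP p.1)
      (fun h => ((Finset.mem_filter.1 hp).2.ne' (hb h))) hpd
  -- the ζ specialization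
  set θ : MvPolynomial (Fin m) ℤ →ₐ[ℤ] ℂ := (Polynomial.aeval ζ).comp (ψ (fun t => a t)) with hθ
  have hθD : θ Dpoly = Matrix.det (Matrix.of fun i j : Fin m => ζ ^ (a i * b j)) := by
    rw [hDpoly, show (θ (Matrix.det (Matrix.of fun i j : Fin m => (X i) ^ (b j))) = _) from
      RingHom.map_det θ.toRingHom _]
    congr 1
    funext i j
    simp [RingHom.mapMatrix_apply, Matrix.map_apply, hθ, hψ, pow_mul]
  have hθV : θ Vd ≠ 0 := by
    rw [hVd, map_prod]
    rw [Finset.prod_ne_zero_iff]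
    intro p hp
    have : θ (X p.2 - X p.1) = ζ ^ (a p.2) - ζ ^ (a p.1) := by
      simp [hθ, hψ, map_sub]
    rw [this, sub_ne_zero]
    intro hcon
    have := hζ.pow_inj (haP p.2) (haP p.1) hcon
    exact (Finset.mem_filter.1 hp).2.ne' (ha this)
  have hθQ : θ Q ≠ 0 := by
    intro hcon
    have hint : IsIntegral ℤ ζ := hζ.isIntegral hP.pos
    have haeval : (Polynomial.aeval ζ) (ψ (fun t => a t) Q) = 0 := by
      rw [← hcon, hθ]; rfl
    have hmin : minpoly ℤ ζ ∣ ψ (fun t => a t) Q :=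
      minpoly.isIntegrallyClosed_dvd hint haeval
    rw [← Polynomial.cyclotomic_eq_minpoly hζ hP.pos] at hmin
    obtain ⟨h, hh⟩ := hmin
    have : (ψ (fun t => a t) Q).eval 1 = (P : ℤ) * h.eval 1 := by
      rw [hh, Polynomial.eval_mul, Polynomial.eval_one_cyclotomic_prime]
    have heq : (ψ (fun t => a t) Q).eval 1 = q1.eval 1 := by
      rw [hq1def, hψ]
      rw [eval_one_psi, eval_one_psi]
    exact hq1P ⟨h.eval 1, by rw [← heq, this]⟩
  have : θ Dpoly ≠ 0 := by
    rw [hQ, _root_.map_mul]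
    exact mul_ne_zero hθV hθQ
  rw [hθD] at this
  exact this

/-- geometric sum bound in ℕ -/
lemma geom_nat (k E : ℕ) : ∑ j ∈ Finset.range E, k * (k+1)^j = (k+1)^E - 1 := by
  induction E with
  | zero => simp
  | succ E ih =>
      rw [Finset.sum_range_succ, ih]
      have h1 : 1 ≤ (k+1)^E := Nat.one_le_pow _ _ (by omega)
      have h2 : (k+1)^(E+1) = k * (k+1)^E + (k+1)^E := by ring
      omega

/-- base-(k+1) encoding respects (reverse) lexicographic comparison -/
lemma encode_lt {Pn k : ℕ} (f h : Fin Pn → ℕ) (hf : ∀ v, f v ≤ k) (hh : ∀ v, h v ≤ k)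
    (w0 : Fin Pn) (heq : ∀ x, x < w0 → f x = h x) (hlt : f w0 < h w0) :
    ∑ v, f v * (k+1)^(Pn - 1 - (v : ℕ)) < ∑ v, h v * (k+1)^(Pn - 1 - (v : ℕ)) := by
  classical
  set B := k + 1 with hB
  set e : Fin Pn → ℕ := fun v => Pn - 1 - (v : ℕ) with he
  have hsplit : ∀ g : Fin Pn → ℕ, ∑ v, g v * B ^ (e v)
      = (∑ v ∈ Finset.Iio w0, g v * B ^ (e v)) + g w0 * B ^ (e w0)
        + ∑ v ∈ Finset.Ioi w0, g v * B ^ (e v) := by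
    intro g
    have : (Finset.univ : Finset (Fin Pn)) = Finset.Iio w0 ∪ {w0} ∪ Finset.Ioi w0 := by
      ext x
      simp only [Finset.mem_univ, Finset.mem_union, Finset.mem_Iio, Finset.mem_singleton,
        Finset.mem_Ioi, true_iff]
      rcases lt_trichotomy x w0 with h | h | h
      · exact Or.inl (Or.inl h)
      · exact Or.inl (Or.inr h)
      · exact Or.inr h
    have hd1 : Disjoint (Finset.Iio w0) ({w0} : Finset (Fin Pn)) := by
      simp [Finset.disjoint_right]
    have hd2 : Disjoint (Finset.Iio w0 ∪ {w0}) (Finset.Ioi w0) := by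
      rw [Finset.disjoint_left]
      intro x hx hy
      have hy' := Finset.mem_Ioi.1 hy
      rcases Finset.mem_union.1 hx with hc | hc
      · exact lt_irrefl x ((Finset.mem_Iio.1 hc).trans hy')
      · rw [Finset.mem_singleton] at hc
        subst hc
        exact lt_irrefl _ hy'
    rw [this, Finset.sum_union hd2, Finset.sum_union hd1]
    simp [add_assoc]
  rw [hsplit f, hsplit h]
  have heqIio : ∑ v ∈ Finset.Iio w0, f v * B ^ (e v) = ∑ v ∈ Finset.Iio w0, h v * B ^ (e v) :=
    Finset.sum_congr rfl fun x hx => by rw [heq x (Finset.mem_Iio.1 hx)]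
  rw [heqIio]
  have htail : ∑ v ∈ Finset.Ioi w0, f v * B ^ (e v) ≤ B ^ (e w0) - 1 := by
    calc ∑ v ∈ Finset.Ioi w0, f v * B ^ (e v)
        ≤ ∑ v ∈ Finset.Ioi w0, k * B ^ (e v) :=
          Finset.sum_le_sum fun v _ => Nat.mul_le_mul_right _ (hf v)
      _ = ∑ j ∈ (Finset.Ioi w0).image e, k * B ^ j := by
          rw [Finset.sum_image]
          intro x hx y hy hxy
          have hx' := Finset.mem_Ioi.1 hx
          have hy' := Finset.mem_Ioi.1 hy
          have : (x : ℕ) = y := by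
            have hxlt := x.isLt; have hylt := y.isLt
            simp only [he] at hxy
            omega
          exact Fin.ext this
      _ ≤ ∑ j ∈ Finset.range (e w0), k * B ^ j := by
          refine Finset.sum_le_sum_of_subset ?_
          intro j hj
          obtain ⟨x, hx, rfl⟩ := Finset.mem_image.1 hj
          have hx' := Finset.mem_Ioi.1 hx
          have hxlt := x.isLt
          have hw0lt := w0.isLt
          simp only [Finset.mem_range, he]
          have : (w0 : ℕ) < (x : ℕ) := hx'
          omega
      _ = B ^ (e w0) - 1 := geom_nat k (e w0)
  have hmid : f w0 * B ^ (e w0) + B ^ (e w0) ≤ h w0 * B ^ (e w0) := by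
    have : (f w0 + 1) * B ^ (e w0) ≤ h w0 * B ^ (e w0) :=
      Nat.mul_le_mul_right _ (by omega)
    nlinarith []
  have hpos : 1 ≤ B ^ (e w0) := Nat.one_le_pow _ _ (by omega)
  omega

open Finset in
/-- fiber of the block-assignment map has the same cardinality for every permutation -/
lemma fiber_card {P k : ℕ} (κ : Fin k → Fin P) (σ : Equiv.Perm (Fin k)) (b : Fin P) :
    (univ.filter fun i => κ (σ⁻¹ i) = b).card = (univ.filter fun j => κ j = b).card := by
  classical
  refine Finset.card_bij (fun i _ => σ⁻¹ i) ?_ ?_ ?_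
  · intro i hi; simpa using (Finset.mem_filter.1 hi).2
  · intro i hi i' hi' h; exact σ⁻¹.injective h
  · intro j hj
    exact ⟨σ j, Finset.mem_filter.2 ⟨mem_univ _, by simpa using (Finset.mem_filter.1 hj).2⟩,
      by simp⟩

open Finset in
lemma key_comb {P k : ℕ} [NeZero P] (n κ : Fin k → Fin P) (hn : Function.Injective n) :
    ∃ σs : Equiv.Perm (Fin k), ∀ σ : Equiv.Perm (Fin k),
      (∀ v : Fin P,
        (univ.filter (fun i => n i - κ (σ⁻¹ i) = v)).card
          = (univ.filter (fun i => n i - κ (σs⁻¹ i) = v)).card) →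
      ∀ i, κ (σ⁻¹ i) = κ (σs⁻¹ i) := by
  classical
  let g : Equiv.Perm (Fin k) → Fin k → Fin P := fun σ i => n i - κ (σ⁻¹ i)
  have hgdef : ∀ σ i, g σ i = n i - κ (σ⁻¹ i) := fun _ _ => rfl
  let cnt : Equiv.Perm (Fin k) → Fin P → ℕ :=
    fun σ v => (univ.filter (fun i => g σ i = v)).card
  have hcntdef : ∀ σ v, cnt σ v = (univ.filter (fun i => g σ i = v)).card := fun _ _ => rfl
  let Φ : Equiv.Perm (Fin k) → ℕ :=
    fun σ => ∑ v : Fin P, cnt σ v * (k+1)^(P - 1 - (v : ℕ))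
  obtain ⟨σs, -, hmax⟩ := Finset.exists_max_image univ Φ ⟨1, mem_univ 1⟩
  refine ⟨σs, ?_⟩
  intro σ hα
  by_contra hcon
  push_neg at hcon
  obtain ⟨iw, hiw⟩ := hcon
  have hα' : ∀ x : Fin P, cnt σ x = cnt σs x := fun x => hα x
  -- values where the level sets disagree
  have hVne : (univ.filter (fun v : Fin P =>
      univ.filter (fun i => g σ i = v) ≠ univ.filter (fun i => g σs i = v))).Nonempty := by
    refine ⟨g σ iw, Finset.mem_filter.2 ⟨mem_univ _, ?_⟩⟩
    intro hEq
    have h1 : iw ∈ univ.filter (fun i => g σ i = g σ iw) := by simp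
    rw [hEq] at h1
    have h2 : g σs iw = g σ iw := by simpa using (Finset.mem_filter.1 h1).2
    have h3 : n iw - κ (σs⁻¹ iw) = n iw - κ (σ⁻¹ iw) := h2
    exact hiw (sub_right_injective h3).symm
  set V := univ.filter (fun v : Fin P =>
      univ.filter (fun i => g σ i = v) ≠ univ.filter (fun i => g σs i = v)) with hV
  set v := V.min' hVne with hv
  have hvV : v ∈ V := Finset.min'_mem _ _
  have hvne : univ.filter (fun i => g σ i = v) ≠ univ.filter (fun i => g σs i = v) :=
    (Finset.mem_filter.1 hvV).2
  have hvmin : ∀ x : Fin P, x < v →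
      univ.filter (fun i => g σ i = x) = univ.filter (fun i => g σs i = x) := by
    intro x hx
    by_contra hxne
    have : x ∈ V := Finset.mem_filter.2 ⟨mem_univ _, hxne⟩
    exact absurd (Finset.min'_le _ _ this) (not_le.2 hx)
  -- i₀ in the σ-level set not in the σs-level set
  obtain ⟨i₀, hi₀σ, hi₀σs⟩ : ∃ i₀, g σ i₀ = v ∧ g σs i₀ ≠ v := by
    have hsub : ¬ (univ.filter (fun i => g σ i = v) ⊆ univ.filter (fun i => g σs i = v)) := by
      intro hsub
      exact hvne (Finset.eq_of_subset_of_card_le hsub (le_of_eq (hα' v).symm))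
    obtain ⟨i₀, h1, h2⟩ := Finset.not_subset.1 hsub
    exact ⟨i₀, by simpa using (Finset.mem_filter.1 h1).2, by
      intro h; exact h2 (Finset.mem_filter.2 ⟨mem_univ _, h⟩)⟩
  set b := κ (σ⁻¹ i₀) with hb
  have hnb : n i₀ - b = v := hi₀σ
  -- find itl in the σs-fiber of b not in the σ-fiber
  obtain ⟨itl, hitlσs, hitlσ⟩ : ∃ itl, κ (σs⁻¹ itl) = b ∧ κ (σ⁻¹ itl) ≠ b := by
    have hcards : (univ.filter fun i => κ (σs⁻¹ i) = b).card
        = (univ.filter fun i => κ (σ⁻¹ i) = b).card := by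
      rw [fiber_card, fiber_card]
    have hsub : ¬ (univ.filter (fun i => κ (σs⁻¹ i) = b) ⊆
        univ.filter (fun i => κ (σ⁻¹ i) = b)) := by
      intro hsub
      have heqf := Finset.eq_of_subset_of_card_le hsub (le_of_eq hcards.symm)
      have hi₀mem : i₀ ∈ univ.filter (fun i => κ (σ⁻¹ i) = b) := by simp [hb]
      rw [← heqf] at hi₀mem
      have hkb : κ (σs⁻¹ i₀) = b := by simpa using (Finset.mem_filter.1 hi₀mem).2
      refine hi₀σs ?_
      show n i₀ - κ (σs⁻¹ i₀) = v
      rw [hkb]; exact hnb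
    obtain ⟨itl, h1, h2⟩ := Finset.not_subset.1 hsub
    exact ⟨itl, by simpa using (Finset.mem_filter.1 h1).2, by
      intro h; exact h2 (Finset.mem_filter.2 ⟨mem_univ _, h⟩)⟩
  have hitli₀ : itl ≠ i₀ := by
    intro h
    subst h
    refine hi₀σs ?_
    show n itl - κ (σs⁻¹ itl) = v
    rw [hitlσs]; exact hnb
  -- u' = g σs itl > v
  have hu'v : v < g σs itl := by
    have hgsitl : g σs itl = n itl - b := by
      show n itl - κ (σs⁻¹ itl) = n itl - b
      rw [hitlσs]
    have hne' : g σs itl ≠ v := by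
      intro h
      rw [hgsitl] at h
      rw [← hnb] at h
      have h2 := congrArg (fun x => x + b) h
      simp only [sub_add_cancel] at h2
      exact hitli₀ (hn h2)
    rcases lt_or_gt_of_ne hne' with h | h
    · exfalso
      have hmem : itl ∈ univ.filter (fun i => g σ i = g σs itl) := by
        rw [hvmin _ h]; simp
      have h5 : g σ itl = g σs itl := by simpa using (Finset.mem_filter.1 hmem).2
      have h6 : n itl - κ (σ⁻¹ itl) = n itl - b := by
        rw [show (n itl - κ (σ⁻¹ itl) : Fin P) = g σ itl from rfl, h5, hgsitl]
      exact hitlσ (sub_right_injective h6)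
    · exact h
  -- v₁ = g σs i₀ > v
  have hv₁v : v < g σs i₀ := by
    rcases lt_or_gt_of_ne hi₀σs with h | h
    · exfalso
      have hmem : i₀ ∈ univ.filter (fun i => g σ i = g σs i₀) := by
        rw [hvmin _ h]; simp
      have h5 : g σ i₀ = g σs i₀ := by simpa using (Finset.mem_filter.1 hmem).2
      rw [hi₀σ] at h5
      exact hi₀σs h5.symm
    · exact h
  -- the improved permutation
  set a1 := σs⁻¹ i₀ with ha1
  set a2 := σs⁻¹ itl with ha2
  have ha12 : a1 ≠ a2 := fun h => hitli₀ (by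
    have := congrArg σs h
    simp [ha1, ha2] at this
    exact this.symm)
  set σ' := σs * Equiv.swap a1 a2 with hσ'
  have hσ'inv : ∀ i, σ'⁻¹ i = Equiv.swap a1 a2 (σs⁻¹ i) := by
    intro i
    show (σs * Equiv.swap a1 a2)⁻¹ i = Equiv.swap a1 a2 (σs⁻¹ i)
    rw [_root_.mul_inv_rev, Equiv.Perm.mul_apply, Equiv.swap_inv]
  have hσ'i₀ : κ (σ'⁻¹ i₀) = b := by
    rw [hσ'inv, ← ha1, Equiv.swap_apply_left, ha2, hitlσs]
  have hσ'itl : κ (σ'⁻¹ itl) = κ a1 := by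
    rw [hσ'inv, ← ha2, Equiv.swap_apply_right]
  have hσ'off : ∀ i, i ≠ i₀ → i ≠ itl → g σ' i = g σs i := by
    intro i h1 h2
    show n i - κ (σ'⁻¹ i) = n i - κ (σs⁻¹ i)
    rw [hσ'inv, Equiv.swap_apply_of_ne_of_ne]
    · intro h; exact h1 (by simpa [ha1] using congrArg σs h)
    · intro h; exact h2 (by simpa [ha2] using congrArg σs h)
  have hgσ'i₀ : g σ' i₀ = v := by
    show n i₀ - κ (σ'⁻¹ i₀) = v
    rw [hσ'i₀]; exact hnb
  -- count identity
  have hsum : ∀ (F : Fin k → ℕ), ∑ i, F i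
      = F i₀ + F itl + ∑ i ∈ (univ.erase i₀).erase itl, F i := by
    intro F
    rw [← Finset.add_sum_erase _ F (mem_univ i₀)]
    rw [← Finset.add_sum_erase _ F (Finset.mem_erase.2 ⟨hitli₀, mem_univ itl⟩)]
    ring
  have hcnt' : ∀ x : Fin P,
      cnt σ' x + (if g σs i₀ = x then 1 else 0) + (if g σs itl = x then 1 else 0)
      = cnt σs x + (if g σ' i₀ = x then 1 else 0) + (if g σ' itl = x then 1 else 0) := by
    intro x
    have hc : ∀ τ : Equiv.Perm (Fin k), cnt τ x = ∑ i, (if g τ i = x then 1 else 0) := by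
      intro τ
      rw [hcntdef, Finset.card_filter]
    rw [hc σ', hc σs, hsum (fun i => if g σ' i = x then 1 else 0),
      hsum (fun i => if g σs i = x then 1 else 0)]
    have hrest : ∑ i ∈ (univ.erase i₀).erase itl, (if g σ' i = x then 1 else 0)
        = ∑ i ∈ (univ.erase i₀).erase itl, (if g σs i = x then 1 else 0) := by
      refine Finset.sum_congr rfl fun i hi => ?_
      have h1 : i ≠ itl := (Finset.mem_erase.1 hi).1
      have h2 : i ≠ i₀ := (Finset.mem_erase.1 (Finset.mem_erase.1 hi).2).1
      rw [hσ'off i h2 h1]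
    rw [hrest]
    ring
  -- Lex improvement
  set u'' := g σ' itl with hu''
  set w0 := min v u'' with hw0
  have hlow : ∀ x : Fin P, x < w0 → cnt σs x = cnt σ' x := by
    intro x hx
    have hxv : x < v := lt_of_lt_of_le hx (min_le_left _ _)
    have hxu'' : x < u'' := lt_of_lt_of_le hx (min_le_right _ _)
    have hid := hcnt' x
    have h1 : g σs i₀ ≠ x := (hxv.trans hv₁v).ne'
    have h2 : g σs itl ≠ x := (hxv.trans hu'v).ne'
    have h3 : g σ' i₀ ≠ x := by rw [hgσ'i₀]; exact hxv.ne'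
    have h4 : g σ' itl ≠ x := by rw [← hu'']; exact hxu''.ne'
    rw [if_neg h1, if_neg h2, if_neg h3, if_neg h4] at hid
    omega
  have hhigh : cnt σs w0 < cnt σ' w0 := by
    have hid := hcnt' w0
    have hw0v : w0 ≤ v := min_le_left _ _
    have h1 : g σs i₀ ≠ w0 := (hw0v.trans_lt hv₁v).ne'
    have h2 : g σs itl ≠ w0 := (hw0v.trans_lt hu'v).ne'
    rw [if_neg h1, if_neg h2] at hid
    have hor : g σ' i₀ = w0 ∨ g σ' itl = w0 := by
      rcases min_choice v u'' with h | h
      · left; rw [hgσ'i₀, hw0, h]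
      · right; rw [← hu'', hw0, h]
    rcases hor with h3 | h3
    · rw [if_pos h3] at hid
      by_cases h4 : g σ' itl = w0
      · rw [if_pos h4] at hid; omega
      · rw [if_neg h4] at hid; omega
    · rw [if_pos h3] at hid
      by_cases h4 : g σ' i₀ = w0
      · rw [if_pos h4] at hid; omega
      · rw [if_neg h4] at hid; omega
  have hΦlt : Φ σs < Φ σ' :=
    encode_lt (cnt σs) (cnt σ')
      (fun v' => le_trans (Finset.card_filter_le _ _) (by simp))
      (fun v' => le_trans (Finset.card_filter_le _ _) (by simp))
      w0 hlow hhigh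
  exact absurd (hmax σ' (mem_univ σ')) (not_le.2 hΦlt)

open Finset in
lemma prod_X_monomial {τ : Type*} {R : Type*} [CommSemiring R] {ι : Type*} [DecidableEq ι]
    (s : Finset ι) (f : ι → τ) :
    ∏ j ∈ s, (MvPolynomial.X (f j) : MvPolynomial τ R)
      = MvPolynomial.monomial (∑ j ∈ s, Finsupp.single (f j) 1) 1 := by
  classical
  induction s using Finset.induction_on with
  | empty => simp
  | @insert a s' hnotmem ih =>
      rw [Finset.prod_insert hnotmem, ih, Finset.sum_insert hnotmem]
      rw [show (MvPolynomial.X (f a) : MvPolynomial τ R)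
        = MvPolynomial.monomial (Finsupp.single (f a) 1) 1 from rfl]
      rw [MvPolynomial.monomial_mul, one_mul]

open Finset in
lemma sum_single_apply {P k : ℕ} (f : Fin k → Fin P) (v : Fin P) :
    (∑ i, Finsupp.single (f i) 1 : Fin P →₀ ℕ) v
      = (univ.filter (fun i => f i = v)).card := by
  classical
  rw [Finset.sum_apply']
  rw [Finset.card_filter]
  refine Finset.sum_congr rfl fun i _ => ?_
  rw [Finsupp.single_apply]

open Finset MvPolynomial in
lemma gabor_minor_poly_ne_zero {P : ℕ} (hP : P.Prime) {k : ℕ}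
    (n κ q : Fin k → Fin P) (hn : Function.Injective n)
    (hcol : Function.Injective (fun j => (κ j, q j))) :
    Matrix.det (Matrix.of fun i j : Fin k =>
      (MvPolynomial.C (Complex.exp (2 * Real.pi * Complex.I / P) ^ ((n i : ℕ) * (q j : ℕ)))
        * MvPolynomial.X (n i - κ j) : MvPolynomial (Fin P) ℂ)) ≠ 0 := by
  classical
  haveI : NeZero P := ⟨hP.ne_zero⟩
  set ζ : ℂ := Complex.exp (2 * Real.pi * Complex.I / P) with hζdef
  obtain ⟨σs, hσs⟩ := key_comb n κ hn
  set Astar : Fin P →₀ ℕ := ∑ i, Finsupp.single (n i - κ (σs⁻¹ i)) 1 with hAstar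
  set A : Equiv.Perm (Fin k) → (Fin P →₀ ℕ) :=
    fun σ => ∑ j, Finsupp.single (n (σ j) - κ j) 1 with hA
  have hreindex : ∀ σ : Equiv.Perm (Fin k),
      A σ = ∑ i, Finsupp.single (n i - κ (σ⁻¹ i)) 1 := by
    intro σ
    rw [hA]
    rw [← Equiv.sum_comp σ (fun i => Finsupp.single (n i - κ (σ⁻¹ i)) 1)]
    exact Finset.sum_congr rfl fun j _ => by rw [(Equiv.Perm.inv_eq_iff_eq.mpr rfl : σ⁻¹ (σ j) = j)]
  -- the condition "A σ = Astar" is equivalent to the block condition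
  have hAiff : ∀ σ : Equiv.Perm (Fin k),
      A σ = Astar ↔ ∀ j, κ j = κ (σs⁻¹ (σ j)) := by
    intro σ
    constructor
    · intro hEq j
      have hcards : ∀ v : Fin P,
          (univ.filter (fun i => n i - κ (σ⁻¹ i) = v)).card
            = (univ.filter (fun i => n i - κ (σs⁻¹ i) = v)).card := by
        intro v
        have := congrArg (fun F : Fin P →₀ ℕ => F v) (hreindex σ ▸ hEq)
        simpa [sum_single_apply, hAstar] using this
      have := hσs σ hcards (σ j)
      rw [(Equiv.Perm.inv_eq_iff_eq.mpr rfl : σ⁻¹ (σ j) = j)] at this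
      exact this.symm ▸ (by rw [← this])
    · intro hcond
      rw [hreindex σ, hAstar]
      rw [← Equiv.sum_comp σ (fun i => Finsupp.single (n i - κ (σs⁻¹ i)) 1)]
      rw [← Equiv.sum_comp σ (fun i => Finsupp.single (n i - κ (σ⁻¹ i)) 1)]
      refine Finset.sum_congr rfl fun j _ => ?_
      rw [(Equiv.Perm.inv_eq_iff_eq.mpr rfl : σ⁻¹ (σ j) = j), ← hcond j]
  -- the block matrix
  set Z : Matrix (Fin k) (Fin k) ℂ := Matrix.of fun i j =>
    if κ j = κ (σs⁻¹ i) then ζ ^ ((n i : ℕ) * (q j : ℕ)) else 0 with hZ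
  -- coefficient extraction
  have hcoeff : MvPolynomial.coeff Astar
      (Matrix.det (Matrix.of fun i j : Fin k =>
        (MvPolynomial.C (ζ ^ ((n i : ℕ) * (q j : ℕ)))
          * MvPolynomial.X (n i - κ j) : MvPolynomial (Fin P) ℂ))) = Matrix.det Z := by
    rw [Matrix.det_apply', Matrix.det_apply', MvPolynomial.coeff_sum]
    refine Finset.sum_congr rfl fun σ _ => ?_
    have hterm : ∏ j, (MvPolynomial.C (ζ ^ ((n (σ j) : ℕ) * (q j : ℕ)))
        * MvPolynomial.X (n (σ j) - κ j) : MvPolynomial (Fin P) ℂ)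
        = MvPolynomial.monomial (A σ) (∏ j, ζ ^ ((n (σ j) : ℕ) * (q j : ℕ))) := by
      rw [Finset.prod_mul_distrib, ← map_prod, prod_X_monomial, hA,
        MvPolynomial.C_mul_monomial, mul_one]
    have hZprod : ∏ j, Z (σ j) j
        = if (∀ j, κ j = κ (σs⁻¹ (σ j))) then ∏ j, ζ ^ ((n (σ j) : ℕ) * (q j : ℕ)) else 0 := by
      by_cases hall : ∀ j, κ j = κ (σs⁻¹ (σ j))
      · rw [if_pos hall]
        refine Finset.prod_congr rfl fun j _ => ?_
        show (if κ j = κ (σs⁻¹ (σ j)) then ζ ^ ((n (σ j) : ℕ) * (q j : ℕ)) else 0) = _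
        rw [if_pos (hall j)]
      · rw [if_neg hall]
        push_neg at hall
        obtain ⟨j₀, hj₀⟩ := hall
        refine Finset.prod_eq_zero (mem_univ j₀) ?_
        show (if κ j₀ = κ (σs⁻¹ (σ j₀)) then ζ ^ ((n (σ j₀) : ℕ) * (q j₀ : ℕ)) else 0) = 0
        rw [if_neg hj₀]
    simp only [Matrix.of_apply] at hterm ⊢
    rw [hterm, hZprod]
    rw [show (((Equiv.Perm.sign σ : ℤ) : MvPolynomial (Fin P) ℂ))
      = MvPolynomial.C ((Equiv.Perm.sign σ : ℤ) : ℂ) from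
        (map_intCast (MvPolynomial.C : ℂ →+* MvPolynomial (Fin P) ℂ) _).symm]
    rw [MvPolynomial.coeff_C_mul, MvPolynomial.coeff_monomial]
    by_cases hcond : A σ = Astar
    · rw [if_pos hcond, if_pos ((hAiff σ).1 hcond)]
    · rw [if_neg hcond, if_neg (fun h => hcond ((hAiff σ).2 h))]
  -- Z has nonzero determinant via Chebotarev block argument
  have hZdet : Matrix.det Z ≠ 0 := by
    intro h0
    obtain ⟨w, hw0, hwv⟩ := Matrix.exists_mulVec_eq_zero_iff.2 h0
    obtain ⟨j₀, hj₀⟩ := Function.ne_iff.1 hw0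
    set bb := κ j₀ with hbb
    set J : Finset (Fin k) := univ.filter (fun j => κ j = bb) with hJ
    set Rs : Finset (Fin k) := univ.filter (fun i => κ (σs⁻¹ i) = bb) with hRs
    have hcard : Rs.card = J.card := fiber_card κ σs bb
    set d := J.card with hd
    let e2 : Fin d ≃ {x // x ∈ J} := J.equivFin.symm
    let e1 : Fin d ≃ {x // x ∈ Rs} := (finCongr (hd ▸ hcard.symm)).trans Rs.equivFin.symm
    have hBdet : Matrix.det (Matrix.of fun s t : Fin d =>
        ζ ^ (((n (e1 s) : ℕ)) * ((q (e2 t)) : ℕ))) ≠ 0 := by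
      refine cheb hP (fun s => (n (e1 s) : ℕ)) (fun t => (q (e2 t) : ℕ))
        (fun s => (n (e1 s)).isLt) (fun t => (q (e2 t)).isLt) ?_ ?_
      · intro s t hst
        have : n (e1 s) = n (e1 t) := Fin.ext hst
        exact e1.injective (Subtype.coe_injective (hn this))
      · intro s t hst
        have hq : q (e2 s) = q (e2 t) := Fin.ext hst
        have hκ : κ (e2 s) = κ (e2 t) := by
          have h1 : κ (e2 s : Fin k) = bb := (Finset.mem_filter.1 (e2 s).2).2
          have h2 : κ (e2 t : Fin k) = bb := (Finset.mem_filter.1 (e2 t).2).2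
          rw [h1, h2]
        have := hcol (show (fun j => (κ j, q j)) (e2 s) = (fun j => (κ j, q j)) (e2 t) by
          simp only [Prod.ext_iff]; exact ⟨hκ, hq⟩)
        exact e2.injective (Subtype.coe_injective this)
    have hBu : (Matrix.of fun s t : Fin d =>
        ζ ^ (((n (e1 s) : ℕ)) * ((q (e2 t)) : ℕ))) *ᵥ (fun t => w (e2 t)) = 0 := by
      funext s
      set i0 : Fin k := (e1 s : Fin k) with hi0
      have he1mem : κ (σs⁻¹ i0) = bb := (Finset.mem_filter.1 (e1 s).2).2
      have hA0 : ∑ j, Z i0 j * w j = 0 := by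
        have : (Z *ᵥ w) i0 = 0 := by rw [hwv]; rfl
        exact this
      have claim1 : ∑ j, Z i0 j * w j
          = ∑ j ∈ J, ζ ^ ((n i0 : ℕ) * (q j : ℕ)) * w j := by
        rw [hJ, Finset.sum_filter]
        refine Finset.sum_congr rfl fun j _ => ?_
        have : Z i0 j = if κ j = κ (σs⁻¹ i0) then ζ ^ ((n i0 : ℕ) * (q j : ℕ)) else 0 := rfl
        rw [this, he1mem]
        split_ifs with h
        · rfl
        · rw [zero_mul]
      have claim2 : ∑ j ∈ J, ζ ^ ((n i0 : ℕ) * (q j : ℕ)) * w j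
          = ∑ t, ζ ^ ((n i0 : ℕ) * ((q (e2 t : Fin k)) : ℕ)) * w (e2 t) := by
        rw [← Finset.sum_coe_sort J (fun j => ζ ^ ((n i0 : ℕ) * (q j : ℕ)) * w j)]
        rw [← Equiv.sum_comp e2
          (fun j : {x // x ∈ J} => ζ ^ ((n i0 : ℕ) * ((q (j : Fin k)) : ℕ)) * w j)]
      show ∑ t, ζ ^ ((n i0 : ℕ) * ((q (e2 t : Fin k)) : ℕ)) * w (e2 t) = 0
      rw [← claim2, ← claim1, hA0]
    have hu0 := Matrix.eq_zero_of_mulVec_eq_zero hBdet hBu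
    have hj₀J : j₀ ∈ J := by rw [hJ]; simp [hbb]
    have : w j₀ = 0 := by
      have := congrFun hu0 (e2.symm ⟨j₀, hj₀J⟩)
      simpa using this
    exact hj₀ this
  intro h0
  rw [h0] at hcoeff
  rw [MvPolynomial.coeff_zero] at hcoeff
  exact hZdet hcoeff.symm

lemma exp_pow_eq {P : ℕ} (n q : Fin P) :
    Complex.exp (2 * Real.pi * Complex.I * (n : ℕ) * (q : ℕ) / P)
      = Complex.exp (2 * Real.pi * Complex.I / P) ^ ((n : ℕ) * (q : ℕ)) := by
  rw [← Complex.exp_nat_mul]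
  congr 1
  push_cast
  ring

open MvPolynomial in
lemma gabor_minor_exists {P : ℕ} (hP : P.Prime) {k : ℕ}
    (r : Fin k → Fin P) (col : Fin k → Fin P × Fin P)
    (hr : Function.Injective r) (hcol : Function.Injective col) :
    ∃ c₀ : Fin P → ℂ,
      Matrix.det (fun i j => gaborMatrix P c₀ (r i) (col j)) ≠ 0 := by
  classical
  haveI : NeZero P := ⟨hP.ne_zero⟩
  by_contra hcon
  push_neg at hcon
  set ζ : ℂ := Complex.exp (2 * Real.pi * Complex.I / P) with hζdef
  have hcol' : Function.Injective (fun j => ((col j).1, (col j).2)) := by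
    intro x y h
    exact hcol (by simpa [Prod.ext_iff] using h)
  have hpoly := gabor_minor_poly_ne_zero hP r (fun j => (col j).1) (fun j => (col j).2)
    hr hcol'
  apply hpoly
  apply MvPolynomial.funext (q := 0)
  intro c
  rw [map_zero]
  rw [show (MvPolynomial.eval c) (Matrix.det (Matrix.of fun i j : Fin k =>
      (MvPolynomial.C (ζ ^ ((r i : ℕ) * (((col j).2) : ℕ)))
        * MvPolynomial.X (r i - (col j).1) : MvPolynomial (Fin P) ℂ))) = _ from
    RingHom.map_det (MvPolynomial.eval c) _]
  have hmat : ((MvPolynomial.eval c).mapMatrix (Matrix.of fun i j : Fin k =>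
      (MvPolynomial.C (ζ ^ ((r i : ℕ) * (((col j).2) : ℕ)))
        * MvPolynomial.X (r i - (col j).1) : MvPolynomial (Fin P) ℂ)))
      = Matrix.of fun i j : Fin k => gaborMatrix P c (r i) (col j) := by
    funext i j
    simp only [RingHom.mapMatrix_apply, Matrix.map_apply, Matrix.of_apply]
    rw [_root_.map_mul, MvPolynomial.eval_C, MvPolynomial.eval_X]
    rw [gaborMatrix, exp_pow_eq, ← hζdef]
    ring
  rw [hmat]
  exact hcon c

lemma gabor_basic_open {P : ℕ} {k : ℕ}
    (r : Fin k → Fin P) (col : Fin k → Fin P × Fin P) :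
    IsOpen {c : Fin P → ℂ |
      Matrix.det (fun i j => gaborMatrix P c (r i) (col j)) ≠ 0} := by
  classical
  have hcont : Continuous (fun c : Fin P → ℂ =>
      Matrix.det (Matrix.of fun i j : Fin k => gaborMatrix P c (r i) (col j))) := by
    refine Continuous.matrix_det ?_
    refine continuous_pi fun i => continuous_pi fun j => ?_
    exact (continuous_apply _).mul continuous_const
  exact isOpen_compl_singleton.preimage hcont

lemma gabor_basic_dense {P : ℕ} (hP : P.Prime) {k : ℕ}
    (r : Fin k → Fin P) (col : Fin k → Fin P × Fin P)
    (hr : Function.Injective r) (hcol : Function.Injective col) :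
    Dense {c : Fin P → ℂ |
      Matrix.det (fun i j => gaborMatrix P c (r i) (col j)) ≠ 0} := by
  classical
  obtain ⟨c₀, hc₀⟩ := gabor_minor_exists hP r col hr hcol
  rw [Metric.dense_iff]
  intro a ε hε
  set dir : Fin P → ℂ := c₀ - a with hdir
  -- the one-variable polynomial
  set N : Matrix (Fin k) (Fin k) (Polynomial ℂ) := Matrix.of fun i j =>
    Polynomial.C (gaborMatrix P a (r i) (col j))
      + Polynomial.X * Polynomial.C (gaborMatrix P dir (r i) (col j)) with hN
  have heval : ∀ t : ℂ, Polynomial.eval t (Matrix.det N)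
      = Matrix.det (Matrix.of fun i j : Fin k =>
          gaborMatrix P (a + t • dir) (r i) (col j)) := by
    intro t
    rw [show Polynomial.eval t (Matrix.det N) = _ from
      RingHom.map_det (Polynomial.evalRingHom t) _]
    congr 1
    funext i j
    simp only [RingHom.mapMatrix_apply, Matrix.map_apply, Matrix.of_apply, hN,
      Polynomial.eval_add, Polynomial.eval_mul, Polynomial.eval_C, Polynomial.eval_X,
      Polynomial.coe_evalRingHom]
    rw [gaborMatrix, gaborMatrix, gaborMatrix]
    simp only [Pi.add_apply, Pi.smul_apply, Pi.sub_apply, smul_eq_mul, hdir]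
    ring
  have hp1 : Polynomial.eval 1 (Matrix.det N) ≠ 0 := by
    rw [heval 1]
    have : a + (1 : ℂ) • dir = c₀ := by
      funext v; simp [hdir]
    rw [this]
    exact hc₀
  have hpne : Matrix.det N ≠ 0 := fun h => hp1 (by rw [h, Polynomial.eval_zero])
  -- choose a small parameter avoiding the finitely many roots
  set δ : ℝ := ε / (‖dir‖ + 1) with hδ
  have hnorm : (0:ℝ) ≤ ‖dir‖ := norm_nonneg _
  have hδpos : 0 < δ := div_pos hε (by linarith)
  have hroots : {t : ℂ | Polynomial.IsRoot (Matrix.det N) t}.Finite :=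
    Polynomial.finite_setOf_isRoot hpne
  have hinj : Function.Injective (fun m : ℕ => (((δ / (m + 2) : ℝ)) : ℂ)) := by
    intro x y hxy
    rw [Complex.ofReal_inj] at hxy
    have hx2 : ((x : ℝ) + 2) ≠ 0 := by positivity
    have hy2 : ((y : ℝ) + 2) ≠ 0 := by positivity
    field_simp at hxy
    exact_mod_cast (add_right_cancel hxy).symm
  obtain ⟨t, ⟨m, rfl⟩, htroot⟩ :=
    (Set.infinite_range_of_injective hinj).exists_notMem_finset hroots.toFinset
  set t : ℂ := (((δ / (m + 2) : ℝ)) : ℂ) with ht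
  refine ⟨a + t • dir, Metric.mem_ball.2 ?_, ?_⟩
  · have htnorm : ‖t‖ = δ / (m + 2) := by
      rw [ht, Complex.norm_real]
      exact abs_of_pos (by positivity)
    have htlt : ‖t‖ < δ := by
      rw [htnorm]
      apply div_lt_self hδpos
      have : (0:ℝ) ≤ (m:ℝ) := Nat.cast_nonneg m
      linarith
    have hδε : δ * (‖dir‖ + 1) = ε := by
      rw [hδ]
      field_simp
    have hlt : ‖t‖ * ‖dir‖ < ε := by
      nlinarith [norm_nonneg t]
    calc dist (a + t • dir) a = ‖t • dir‖ := by
          rw [dist_eq_norm]; congr 1; abel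
      _ = ‖t‖ * ‖dir‖ := norm_smul _ _
      _ < ε := hlt
  · show Matrix.det (fun i j => gaborMatrix P (a + t • dir) (r i) (col j)) ≠ 0
    intro h0
    apply htroot
    rw [Set.Finite.mem_toFinset]
    show Polynomial.IsRoot (Matrix.det N) t
    rw [Polynomial.IsRoot, heval t]
    exact h0

end Gabor

end

open Gabor in
/-- For `P` prime, there is a dense open subset of `c ∈ ℂ^P` such that
every minor of `G(c)` is nonzero; in particular `G(c)` has full Spark (every `P`
columns are linearly independent) for such `c`. -/
theorem gabor_full_spark_prime (P : ℕ) (hP : P.Prime) :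
    ∃ U : Set (Fin P → ℂ), IsOpen U ∧ Dense U ∧ ∀ c ∈ U,
      (∀ (k : ℕ) (r : Fin k → Fin P) (col : Fin k → Fin P × Fin P),
        Function.Injective r → Function.Injective col →
        Matrix.det (fun i j => gaborMatrix P c (r i) (col j)) ≠ 0) ∧
      (∀ s : Finset (Fin P × Fin P), s.card = P →
        LinearIndependent ℂ (fun j : s => fun i => gaborMatrix P c i j)) := by
  classical
  let ι := Σ kk : Fin (P+1), ((Fin (kk : ℕ) → Fin P) × (Fin (kk : ℕ) → Fin P × Fin P))
  let S : ι → Set (Fin P → ℂ) := fun x =>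
    if Function.Injective x.2.1 ∧ Function.Injective x.2.2 then
      {c | Matrix.det (fun i j => gaborMatrix P c (x.2.1 i) (x.2.2 j)) ≠ 0}
    else Set.univ
  have hSopen : ∀ x, IsOpen (S x) := by
    intro x
    show IsOpen (if _ then _ else _)
    split_ifs with h
    · exact gabor_basic_open _ _
    · exact isOpen_univ
  have hSdense : ∀ x, Dense (S x) := by
    intro x
    show Dense (if _ then _ else _)
    split_ifs with h
    · exact gabor_basic_dense hP _ _ h.1 h.2
    · exact dense_univ
  refine ⟨⋂ x : ι, S x, isOpen_iInter_of_finite hSopen,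
    dense_iInter_of_isOpen hSopen hSdense, ?_⟩
  intro c hc
  have hmem : ∀ (k : ℕ) (hk : k < P + 1) (r : Fin k → Fin P)
      (col : Fin k → Fin P × Fin P),
      Function.Injective r → Function.Injective col →
      Matrix.det (fun i j => gaborMatrix P c (r i) (col j)) ≠ 0 := by
    intro k hk r col hrinj hcolinj
    have hx := Set.mem_iInter.1 hc ⟨⟨k, hk⟩, r, col⟩
    have : c ∈ (if Function.Injective r ∧ Function.Injective col then
        {c : Fin P → ℂ | Matrix.det (fun i j => gaborMatrix P c (r i) (col j)) ≠ 0}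
      else Set.univ) := hx
    rw [if_pos ⟨hrinj, hcolinj⟩] at this
    exact this
  constructor
  · intro k r col hrinj hcolinj
    have hkP : k ≤ P := by
      have := Fintype.card_le_of_injective r hrinj
      simpa using this
    exact hmem k (by omega) r col hrinj hcolinj
  · intro s hs
    have e : Fin P ≃ {x // x ∈ s} := ((s.equivFin).trans (finCongr hs)).symm
    have hcolinj : Function.Injective (fun m : Fin P => (e m : Fin P × Fin P)) :=
      fun x y h => e.injective (Subtype.coe_injective h)
    have hdet := hmem P (by omega) id (fun m => (e m : Fin P × Fin P))
      Function.injective_id hcolinj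
    rw [Fintype.linearIndependent_iff]
    intro gcoef hsum
    set A : Matrix (Fin P) (Fin P) ℂ :=
      Matrix.of fun i m => gaborMatrix P c i (e m) with hA
    have hdetA : A.det ≠ 0 := hdet
    have hAv : A *ᵥ (fun m => gcoef (e m)) = 0 := by
      funext i
      show ∑ m, A i m * gcoef (e m) = 0
      have h1 : ∑ m, A i m * gcoef (e m)
          = ∑ j : {x // x ∈ s}, gaborMatrix P c i (j : Fin P × Fin P) * gcoef j := by
        rw [← Equiv.sum_comp e
          (fun j : {x // x ∈ s} => gaborMatrix P c i (j : Fin P × Fin P) * gcoef j)]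
        rfl
      rw [h1]
      have h2 := congrFun hsum i
      rw [Finset.sum_apply] at h2
      simp only [Pi.smul_apply, smul_eq_mul, Pi.zero_apply] at h2
      rw [← h2]
      refine Finset.sum_congr rfl fun j _ => ?_
      ring
    have hv0 := Matrix.eq_zero_of_mulVec_eq_zero hdetA hAv
    intro j
    have := congrFun hv0 (e.symm j)
    simpa using this
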